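/- arXiv:2211.16442 — 3 statements merged into one kernel-verified Lean document; each statement's English description precedes it below -/
import Mathlib

section
/- Let q(λ) = aλ² + bλ + c be a univariate quadratic function and let u, ℓ ∈ ℝ. Let q̲ and q̄ be the minimum and maximum values attained by q on the three points u, ℓ, and (u+ℓ)/2. Then q̄ − q̲ ≥ |a|(u−ℓ)²/4. -/
theorem stmt_0 (a b c u ℓ : ℝ) (q : ℝ → ℝ)
    (hq : ∀ lam : ℝ, q lam = a * lam ^ 2 + b * lam + c) :
    max (max (q u) (q ℓ)) (q ((u + ℓ) / 2)) - min (min (q u) (q ℓ)) (q ((u + ℓ) / 2))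
      ≥ |a| * (u - ℓ) ^ 2 / 4 := by
  have key : q u + q ℓ - 2 * q ((u + ℓ) / 2) = a * (u - ℓ) ^ 2 / 2 := by
    rw [hq, hq, hq]; ring
  have h1 : max (max (q u) (q ℓ)) (q ((u + ℓ) / 2)) ≥ (q u + q ℓ) / 2 := by
    have := le_max_left (q u) (q ℓ)
    have := le_max_right (q u) (q ℓ)
    have := le_max_left (max (q u) (q ℓ)) (q ((u + ℓ) / 2))
    linarith
  have h2 : min (min (q u) (q ℓ)) (q ((u + ℓ) / 2)) ≤ (q u + q ℓ) / 2 := by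
    have := min_le_left (q u) (q ℓ)
    have := min_le_right (q u) (q ℓ)
    have := min_le_left (min (q u) (q ℓ)) (q ((u + ℓ) / 2))
    linarith
  have h3 : max (max (q u) (q ℓ)) (q ((u + ℓ) / 2)) ≥ q ((u + ℓ) / 2) :=
    le_max_right _ _
  have h4 : min (min (q u) (q ℓ)) (q ((u + ℓ) / 2)) ≤ q ((u + ℓ) / 2) :=
    min_le_right _ _
  rcases abs_cases a with ⟨ha, _⟩ | ⟨ha, _⟩
  · rw [ha]
    nlinarith [sq_nonneg (u - ℓ)]
  · rw [ha]
    nlinarith [sq_nonneg (u - ℓ)]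
end

section
/- Let f : ℝ^d × ℝ^(n−d) → ℝ be f(y,z) = yᵀDy + cᵀy + lᵀz where D is diagonal with |D₁₁| maximal among diagonal entries. Suppose (y⁺,z⁺) and (y⁻,z⁻) satisfy y⁺₁ − y⁻₁ ≥ 1 and ∑_{i=2}^d (y⁺ᵢ − y⁻ᵢ)² ≤ 1/4. Then the maximum minus the minimum of f over the three points (y⁺,z⁺), (y⁻,z⁻), and their midpoint is at least (3/16)·|D₁₁|. -/
theorem stmt_5 (d m : ℕ) (hd : 0 < d) (D : Matrix (Fin d) (Fin d) ℝ)
    (hdiag : D.IsDiag)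
    (hmax : ∀ i : Fin d, |D i i| ≤ |D ⟨0, hd⟩ ⟨0, hd⟩|)
    (c : Fin d → ℝ) (l : Fin m → ℝ)
    (f : (Fin d → ℝ) → (Fin m → ℝ) → ℝ)
    (hf : ∀ y z, f y z = (∑ i, D i i * y i ^ 2) + (∑ i, c i * y i) + (∑ j, l j * z j))
    (yp ym : Fin d → ℝ) (zp zm : Fin m → ℝ)
    (h1 : yp ⟨0, hd⟩ - ym ⟨0, hd⟩ ≥ 1)
    (hsum : ∑ i ∈ Finset.univ.erase ⟨0, hd⟩, (yp i - ym i) ^ 2 ≤ 1 / 4) :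
    max (max (f yp zp) (f ym zm)) (f ((yp + ym) / 2) ((zp + zm) / 2)) -
      min (min (f yp zp) (f ym zm)) (f ((yp + ym) / 2) ((zp + zm) / 2))
      ≥ 3 / 16 * |D ⟨0, hd⟩ ⟨0, hd⟩| := by
  set i0 : Fin d := ⟨0, hd⟩
  set a : ℝ := |D i0 i0| with ha
  have ha0 : 0 ≤ a := abs_nonneg _
  set A := f yp zp
  set B := f ym zm
  set M := f ((yp + ym) / 2) ((zp + zm) / 2) with hM
  set S : ℝ := ∑ i, D i i * (yp i - ym i) ^ 2 / 4 with hS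
  -- key identity
  have hkey : (A + B) / 2 - M = S := by
    have h2 : ∀ i, ((yp + ym) / 2) i = (yp i + ym i) / 2 := fun _ => rfl
    have h3 : ∀ j, ((zp + zm) / 2) j = (zp j + zm j) / 2 := fun _ => rfl
    simp only [hS, A, B, hM, hf, h2, h3]
    have e1 : ∑ j, l j * ((zp j + zm j) / 2)
        = (∑ j, l j * zp j) / 2 + (∑ j, l j * zm j) / 2 := by
      rw [Finset.sum_div, Finset.sum_div, ← Finset.sum_add_distrib]
      exact Finset.sum_congr rfl (fun j _ => by ring)
    have e2 : ∑ i, c i * ((yp i + ym i) / 2)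
        = (∑ i, c i * yp i) / 2 + (∑ i, c i * ym i) / 2 := by
      rw [Finset.sum_div, Finset.sum_div, ← Finset.sum_add_distrib]
      exact Finset.sum_congr rfl (fun i _ => by ring)
    have e3 : ∑ i, D i i * ((yp i + ym i) / 2) ^ 2
        = (∑ i, D i i * yp i ^ 2) / 2 + (∑ i, D i i * ym i ^ 2) / 2
          - ∑ i, D i i * (yp i - ym i) ^ 2 / 4 := by
      rw [Finset.sum_div, Finset.sum_div, ← Finset.sum_add_distrib,
        ← Finset.sum_sub_distrib]
      exact Finset.sum_congr rfl (fun i _ => by ring)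
    rw [e1, e2, e3]; ring
  -- bound on the tail
  set T : ℝ := ∑ i ∈ Finset.univ.erase i0, D i i * (yp i - ym i) ^ 2 / 4 with hT
  have hTb : |T| ≤ a / 16 := by
    calc |T| ≤ ∑ i ∈ Finset.univ.erase i0, |D i i * (yp i - ym i) ^ 2 / 4| :=
          Finset.abs_sum_le_sum_abs _ _
      _ ≤ ∑ i ∈ Finset.univ.erase i0, a * (yp i - ym i) ^ 2 / 4 := by
          apply Finset.sum_le_sum
          intro i _
          rw [abs_div, abs_mul, abs_of_nonneg (sq_nonneg (yp i - ym i))]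
          have : |D i i| * (yp i - ym i) ^ 2 ≤ a * (yp i - ym i) ^ 2 :=
            mul_le_mul_of_nonneg_right (hmax i) (sq_nonneg _)
          have h4 : |(4 : ℝ)| = 4 := by norm_num
          rw [h4]
          linarith
      _ = a / 4 * ∑ i ∈ Finset.univ.erase i0, (yp i - ym i) ^ 2 := by
          rw [Finset.mul_sum]; exact Finset.sum_congr rfl (fun i _ => by ring)
      _ ≤ a / 4 * (1 / 4) := by
          apply mul_le_mul_of_nonneg_left hsum (by linarith)
      _ = a / 16 := by ring
  have hsplit : S = D i0 i0 * (yp i0 - ym i0) ^ 2 / 4 + T := by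
    rw [hS, hT, ← Finset.add_sum_erase _ _ (Finset.mem_univ i0)]
  have hhead : a / 4 ≤ |D i0 i0 * (yp i0 - ym i0) ^ 2 / 4| := by
    rw [abs_div, abs_mul, abs_of_nonneg (sq_nonneg (yp i0 - ym i0))]
    have h4 : |(4 : ℝ)| = 4 := by norm_num
    rw [h4]
    have hsq : 1 ≤ (yp i0 - ym i0) ^ 2 := by nlinarith
    nlinarith [abs_nonneg (D i0 i0)]
  have hSb : 3 / 16 * a ≤ |S| := by
    have : |D i0 i0 * (yp i0 - ym i0) ^ 2 / 4| - |T| ≤ |S| := by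
      rw [hsplit]
      have := abs_add_le (D i0 i0 * (yp i0 - ym i0) ^ 2 / 4 + T) (-T)
      simp only [add_neg_cancel_right, abs_neg] at this
      linarith
    linarith
  -- max - min ≥ |(A+B)/2 - M|
  have hAmax : A ≤ max (max A B) M := le_max_of_le_left (le_max_left _ _)
  have hBmax : B ≤ max (max A B) M := le_max_of_le_left (le_max_right _ _)
  have hMmax : M ≤ max (max A B) M := le_max_right _ _
  have hAmin : min (min A B) M ≤ A := min_le_of_left_le (min_le_left _ _)
  have hBmin : min (min A B) M ≤ B := min_le_of_left_le (min_le_right _ _)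
  have hMmin : min (min A B) M ≤ M := min_le_right _ _
  have habs : |(A + B) / 2 - M| ≤ max (max A B) M - min (min A B) M := by
    rcases abs_cases ((A + B) / 2 - M) with ⟨h, _⟩ | ⟨h, _⟩ <;> rw [h] <;> linarith
  rw [hkey] at habs
  linarith
end

section
/- Let H̃ be a symmetric n×n real matrix, k an index, and suppose |H̃_{rk}| = max over i,j ∈ {k,…,n} of |H̃_{ij}| for some r > k. Set γ = +1 if H̃_{rk}(H̃_{kk} + H̃_{rr}) ≥ 0 and γ = −1 otherwise, and let H̿ be obtained from H̃ by adding γ times row r to row k and γ times column r to column k. Then |H̿_{kk}| = max over i,j ∈ {k,…,n} of |H̿_{ij}|. -/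
theorem stmt_6 (n : ℕ) (H : Matrix (Fin n) (Fin n) ℝ) (hsym : H.IsSymm)
    (k r : Fin n) (hkr : k < r)
    (hmax : ∀ i j : Fin n, k ≤ i → k ≤ j → |H i j| ≤ |H r k|)
    (γ : ℝ) (hγ : γ = if H r k * (H k k + H r r) ≥ 0 then (1 : ℝ) else -1)
    (P : Matrix (Fin n) (Fin n) ℝ)
    (hP : P = 1 + Matrix.single k r γ)
    (H2 : Matrix (Fin n) (Fin n) ℝ) (hH2 : H2 = P * H * P.transpose) :
    ∀ i j : Fin n, k ≤ i → k ≤ j → |H2 i j| ≤ |H2 k k| := by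
  have hkr' : k ≤ r := hkr.le
  have hγ2 : γ * γ = 1 := by rw [hγ]; split_ifs <;> norm_num
  have habsγ : |γ| = 1 := by rw [hγ]; split_ifs <;> norm_num
  have hBt : P.transpose = 1 + Matrix.single r k γ := by
    rw [hP, Matrix.transpose_add, Matrix.transpose_one]
    congr 1
    ext i j
    simp [Matrix.single, and_comm]
  have hentry : ∀ i j, H2 i j = H i j + (if i = k then γ * H r j else 0)
      + (if j = k then H i r * γ else 0)
      + (if i = k then (if j = k then γ * H r r * γ else 0) else 0) := by
    intro i j
    rw [hH2, hBt, hP, Matrix.mul_add, Matrix.add_mul, Matrix.add_mul, Matrix.mul_one,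
      Matrix.one_mul]
    by_cases hi : i = k <;> by_cases hj : j = k <;>
      simp [Matrix.add_apply, hi, hj, mul_comm] <;> ring
  have hsym' : ∀ a b : Fin n, H a b = H b a := fun a b => congrFun (congrFun hsym b) a
  have h2kk : H2 k k = (H k k + H r r) + 2 * γ * H r k := by
    rw [hentry, hsym' k r]
    simp only [if_pos rfl, if_true, ite_true]
    linear_combination (H r r) * hγ2
  have hγa : 0 ≤ γ * (H r k * (H k k + H r r)) := by
    rw [hγ]; split_ifs with h
    · simpa using h
    · nlinarith [lt_of_not_ge h]
  have hX2 : (H k k + H r r + 2 * γ * H r k)^2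
      = (H k k + H r r)^2 + 4*(γ * (H r k * (H k k + H r r))) + 4*(H r k)^2 := by
    linear_combination (4*(H r k)^2) * hγ2
  have hlow : 2 * |H r k| ≤ |H2 k k| := by
    rw [h2kk]
    nlinarith [hX2, hγa, sq_abs (H k k + H r r + 2 * γ * H r k), sq_abs (H r k),
      abs_nonneg (H k k + H r r + 2 * γ * H r k), abs_nonneg (H r k),
      sq_nonneg (H k k + H r r)]
  intro i j hi hj
  by_cases hik : i = k
  · by_cases hjk : j = k
    · rw [hik, hjk]
    · refine le_trans ?_ hlow
      rw [hentry]
      rw [hik]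
      simp [hjk]
      have h1 : |H k j| ≤ |H r k| := hmax k j le_rfl hj
      have h2 : |H r j| ≤ |H r k| := hmax r j hkr' hj
      have h3 := abs_add_le (H k j) (γ * H r j)
      rw [abs_mul, habsγ, one_mul] at h3
      linarith
  · by_cases hjk : j = k
    · refine le_trans ?_ hlow
      rw [hentry]
      rw [hjk]
      simp [hik]
      have h1 : |H i k| ≤ |H r k| := hmax i k hi le_rfl
      have h2 : |H i r| ≤ |H r k| := hmax i r hi hkr'
      have h3 := abs_add_le (H i k) (H i r * γ)
      rw [abs_mul, habsγ, mul_one] at h3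
      linarith
    · have h1 := hmax i j hi hj
      have h0 := abs_nonneg (H r k)
      calc |H2 i j| = |H i j| := by rw [hentry]; simp [hik, hjk]
        _ ≤ 2 * |H r k| := by linarith
        _ ≤ |H2 k k| := hlow
end
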